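/- arXiv:0910.2875 — 2 statements merged into one kernel-verified Lean document; each statement's English description precedes it below -/
import Mathlib

section
/- Let (φ_{s,t}) be an evolution family in 𝔻. Then either (a) for every s ≥ 0 the set { t ∈ [s,∞) : φ_{s,t} ∈ Aut(𝔻) } is bounded above, or (b) there exists α ≥ 0 such that: (1) φ_{s,t} ∈ Aut(𝔻) for all α ≤ s ≤ t; and (2) if α > 0, then for every r ∈ [0,α) the map h_r := φ_{r,α} is NOT in Aut(𝔻), h_r → id_𝔻 uniformly on compact subsets of 𝔻 as r → α⁻, and φ_{r,t} = φ_{α,t} ∘ h_r for all 0 ≤ r < α ≤ t. Here Aut(𝔻) denotes the set of bijective holomorphic self-maps of 𝔻. -/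
open Complex MeasureTheory Set Filter Topology

/-- The open unit disk `𝔻`. -/
def UD : Set ℂ := {z : ℂ | ‖z‖ < 1}


open Metric Function

lemma UD_eq : UD = Metric.ball (0:ℂ) 1 := by
  ext z
  simp [UD, Metric.mem_ball, Complex.dist_eq, Complex.norm_def]

lemma isOpen_UD : IsOpen UD := UD_eq ▸ Metric.isOpen_ball

lemma mem_UD {z : ℂ} : z ∈ UD ↔ ‖z‖ < 1 := Iff.rfl

lemma zero_mem_UD : (0:ℂ) ∈ UD := by simp [mem_UD]

lemma UD_nhds {z : ℂ} (hz : z ∈ UD) : UD ∈ 𝓝 z := isOpen_UD.mem_nhds hz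

/-- Splitting a bijection into injective pieces. -/
lemma bijOn_split {f g h : ℂ → ℂ} (heq : ∀ z ∈ UD, h z = g (f z))
    (hf : MapsTo f UD UD) (hginj : InjOn g UD) (hgm : MapsTo g UD UD)
    (hh : BijOn h UD UD) : BijOn f UD UD ∧ BijOn g UD UD := by
  have hgs : SurjOn g UD UD := by
    intro y hy
    obtain ⟨x, hx, hxy⟩ := hh.surjOn hy
    exact ⟨f x, hf hx, by rw [← heq x hx, hxy]⟩
  have hfi : InjOn f UD := by
    intro x hx x' hx' hxx
    exact hh.injOn hx hx' (by rw [heq x hx, heq x' hx', hxx])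
  have hfs : SurjOn f UD UD := by
    intro y hy
    obtain ⟨x, hx, hxy⟩ := hh.surjOn (hgm hy)
    rw [heq x hx] at hxy
    exact ⟨x, hx, hginj (hf hx) hy hxy⟩
  exact ⟨⟨hf, hfi, hfs⟩, ⟨hgm, hginj, hgs⟩⟩

noncomputable def mob (a z : ℂ) : ℂ := (a - z) / (1 - (starRingEnd ℂ a) * z)

lemma mob_denom_ne {a z : ℂ} (ha : a ∈ UD) (hz : z ∈ UD) :
    (1 : ℂ) - (starRingEnd ℂ a) * z ≠ 0 := by
  intro h
  have h1 : ‖(starRingEnd ℂ a) * z‖ < 1 := by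
    rw [norm_mul, Complex.norm_conj]
    calc ‖a‖ * ‖z‖ ≤ 1 * ‖z‖ := by
          exact mul_le_mul_of_nonneg_right ha.le (norm_nonneg z)
      _ < 1 := by rw [one_mul]; exact hz
  have h2 : (starRingEnd ℂ a) * z = 1 := by linear_combination -h
  rw [h2] at h1; simp at h1

lemma normSq_mob_identity (a z : ℂ) :
    Complex.normSq (1 - (starRingEnd ℂ a) * z) - Complex.normSq (a - z)
      = (1 - Complex.normSq a) * (1 - Complex.normSq z) := by
  simp only [Complex.normSq_apply, Complex.sub_re, Complex.sub_im, Complex.mul_re,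
    Complex.mul_im, Complex.one_re, Complex.one_im, Complex.conj_re, Complex.conj_im]
  ring

lemma normSq_lt_one_iff {z : ℂ} : Complex.normSq z < 1 ↔ ‖z‖ < 1 := by
  rw [← Complex.sq_norm]
  constructor
  · intro h
    nlinarith [norm_nonneg z]
  · intro h
    nlinarith [norm_nonneg z]

lemma mob_mem {a z : ℂ} (ha : a ∈ UD) (hz : z ∈ UD) : mob a z ∈ UD := by
  have hd := mob_denom_ne ha hz
  have h1 : Complex.normSq a < 1 := normSq_lt_one_iff.2 ha
  have h2 : Complex.normSq z < 1 := normSq_lt_one_iff.2 hz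
  have key := normSq_mob_identity a z
  have hlt : Complex.normSq (a - z) < Complex.normSq (1 - (starRingEnd ℂ a) * z) := by
    nlinarith
  rw [mem_UD, mob, norm_div, div_lt_one]
  · rw [← Real.sqrt_lt_sqrt_iff (Complex.normSq_nonneg _)] at hlt
    simpa [Complex.norm_def] using hlt
  · have := norm_pos_iff.mpr hd
    exact this

lemma mob_zero (a : ℂ) : mob a 0 = a := by simp [mob]

lemma mob_self (a : ℂ) : mob a a = 0 := by simp [mob]

lemma mob_invol {a z : ℂ} (ha : a ∈ UD) (hz : z ∈ UD) : mob a (mob a z) = z := by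
  have h1 := mob_denom_ne ha hz
  have h2 := mob_denom_ne ha (mob_mem ha hz)
  have h3 : (1:ℂ) - (starRingEnd ℂ a) * a ≠ 0 := mob_denom_ne ha ha
  simp only [mob] at h2 ⊢
  rw [div_eq_iff h2]
  have h1' : (1:ℂ) - z * (starRingEnd ℂ a) ≠ 0 := by rwa [mul_comm]
  field_simp
  ring

lemma mob_diff {a : ℂ} (ha : a ∈ UD) : DifferentiableOn ℂ (mob a) UD := by
  apply DifferentiableOn.div
  · exact (differentiableOn_const a).sub differentiableOn_id
  · exact (differentiableOn_const 1).sub ((differentiableOn_const _).mul differentiableOn_id)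
  · intro z hz; exact mob_denom_ne ha hz

/-- The Schwarz–Pick inequality. -/
lemma schwarz_pick {f : ℂ → ℂ} (hd : DifferentiableOn ℂ f UD) (hm : MapsTo f UD UD)
    {v w : ℂ} (hv : v ∈ UD) (hw : w ∈ UD) :
    ‖mob (f v) (f w)‖ ≤ ‖mob v w‖ := by
  have hfv : f v ∈ UD := hm hv
  set g : ℂ → ℂ := fun z => mob (f v) (f (mob v z)) with hg
  have hmapsg : MapsTo g UD UD := fun z hz => mob_mem hfv (hm (mob_mem hv hz))
  have hdg : DifferentiableOn ℂ g UD := by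
    apply DifferentiableOn.comp (mob_diff hfv) (hd.comp (mob_diff hv) (fun z hz => mob_mem hv hz))
    exact fun z hz => hm (mob_mem hv hz)
  have hg0 : g 0 = 0 := by rw [hg]; simp [mob_zero, mob_self]
  have hz' : mob v w ∈ UD := mob_mem hv hw
  have key : ‖g (mob v w)‖ ≤ ‖mob v w‖ := by
    have := Complex.norm_le_norm_of_mapsTo_ball (R := 1)
      (by rw [← UD_eq]; exact hdg) (by rw [← UD_eq]; intro z hz; have := hmapsg hz; rw [UD_eq] at this; exact Metric.ball_subset_closedBall this) hg0
      (by rw [← mem_UD]; exact hz')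
    exact this
  have keq : g (mob v w) = mob (f v) (f w) := by
    show mob (f v) (f (mob v (mob v w))) = mob (f v) (f w)
    rw [mob_invol hv hw]
  rwa [keq] at key

/-- Uniform Lipschitz bound for holomorphic self-maps of the disk. -/
lemma lipschitz_UD {f : ℂ → ℂ} (hd : DifferentiableOn ℂ f UD) (hm : MapsTo f UD UD)
    {c z : ℂ} (hc : c ∈ UD) (hz : dist z c < 1 - ‖c‖) :
    dist (f z) (f c) ≤ 2 / (1 - ‖c‖) * dist z c := by
  have hsub : Metric.ball c (1 - ‖c‖) ⊆ UD := by
    intro x hx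
    rw [mem_UD]
    calc ‖x‖ = ‖x - c + c‖ := by ring_nf
      _ ≤ ‖x - c‖ + ‖c‖ := norm_add_le _ _
      _ < (1 - ‖c‖) + ‖c‖ := by
          rw [Metric.mem_ball, Complex.dist_eq] at hx; linarith
      _ = 1 := by ring
  have hmaps2 : MapsTo f (Metric.ball c (1 - ‖c‖)) (Metric.ball (f c) 2) := by
    intro x hx
    have h1 : f x ∈ UD := hm (hsub hx)
    have h2 : f c ∈ UD := hm hc
    rw [mem_UD] at h1 h2
    rw [Metric.mem_ball, Complex.dist_eq]
    calc ‖f x - f c‖ ≤ ‖f x‖ + ‖f c‖ :=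
          norm_sub_le _ _ -- check name
      _ < 2 := by linarith
  exact Complex.dist_le_div_mul_dist_of_mapsTo_ball (hd.mono hsub) (hmaps2.mono_right Metric.ball_subset_closedBall)
    (by rwa [Metric.mem_ball])

lemma abs_le_of_mob_le {a z : ℂ} {c m : ℝ} (ha : a ∈ UD) (hz : z ∈ UD)
    (h : ‖mob a z‖ ≤ c) (ham : ‖a‖ ≤ m) (hc : 0 ≤ c) (hcm : c * m < 1) :
    ‖z‖ ≤ (m + c) / (1 - c * m) := by
  have hd := mob_denom_ne ha hz
  have h1 : ‖a - z‖ ≤ c * ‖1 - (starRingEnd ℂ a) * z‖ := by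
    have := h
    rw [mob, norm_div, div_le_iff₀ (norm_pos_iff.mpr hd)] at this
    linarith
  have h2 : ‖1 - (starRingEnd ℂ a) * z‖ ≤ 1 + ‖a‖ * ‖z‖ := by
    calc ‖1 - (starRingEnd ℂ a) * z‖
        ≤ ‖1‖ + ‖(starRingEnd ℂ a) * z‖ := norm_sub_le _ _
      _ = 1 + ‖a‖ * ‖z‖ := by rw [norm_mul, Complex.norm_conj, norm_one]
  have h3 : ‖z‖ ≤ ‖a‖ + ‖a - z‖ := by
    calc ‖z‖ = ‖a - (a - z)‖ := by ring_nf
      _ ≤ ‖a‖ + ‖a - z‖ := norm_sub_le _ _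
  have hz0 : 0 ≤ ‖z‖ := norm_nonneg z
  have ha0 : 0 ≤ ‖a‖ := norm_nonneg a
  rw [le_div_iff₀ (by linarith)]
  nlinarith [mul_le_mul_of_nonneg_left h2 hc, mul_le_mul_of_nonneg_right ham hz0]

/-- Pointwise convergence to the identity upgrades to local uniform convergence. -/
lemma tendstoUniformlyOn_of_pointwise {ι : Type} {l : Filter ι} {F : ι → ℂ → ℂ}
    (hd : ∀ᶠ i in l, DifferentiableOn ℂ (F i) UD ∧ MapsTo (F i) UD UD)
    (hp : ∀ c ∈ UD, Tendsto (fun i => F i c) l (𝓝 c))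
    {K : Set ℂ} (hK : K ⊆ UD) (hKc : IsCompact K) :
    TendstoUniformlyOn F (fun z => z) l K := by
  rcases K.eq_empty_or_nonempty with rfl | hne
  · simp [TendstoUniformlyOn]
  rw [Metric.tendstoUniformlyOn_iff]
  intro ε hε
  obtain ⟨cm, hcmK, hcm'⟩ := hKc.exists_isMaxOn hne continuous_norm.continuousOn
  have hcm : ∀ c ∈ K, ‖c‖ ≤ ‖cm‖ := fun c hc => hcm' hc
  set ρ : ℝ := ‖cm‖ with hρ
  have hρ1 : ρ < 1 := mem_UD.1 (hK hcmK)
  have hρ0 : 0 ≤ ρ := norm_nonneg _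
  set δ : ℝ := min ((1-ρ)/2) (ε*(1-ρ)/8) with hδ
  have hδ0 : 0 < δ := by
    apply lt_min <;> nlinarith
  -- finite subcover
  obtain ⟨t, htK, htcov⟩ := hKc.elim_nhds_subcover (fun c => Metric.ball c δ)
    (fun c _ => Metric.ball_mem_nhds c hδ0)
  have hev1 : ∀ᶠ i in l, ∀ c ∈ t, dist (F i c) c < ε/4 := by
    rw [eventually_all_finset]
    intro c hc
    have := hp c (hK (htK c hc))
    exact (Metric.tendsto_nhds.mp this) (ε/4) (by linarith)
  filter_upwards [hd, hev1] with i ⟨hdi, hmi⟩ hci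
  intro x hx
  obtain ⟨c, hct, hxc⟩ : ∃ c ∈ t, x ∈ Metric.ball c δ := by
    have := htcov hx
    simpa using this
  have hcK : c ∈ K := htK c hct
  have hcabs : ‖c‖ ≤ ρ := hcm c hcK
  have h1c : (1:ℝ) - ρ ≤ 1 - ‖c‖ := by linarith
  have hdist : dist x c < 1 - ‖c‖ := by
    rw [Metric.mem_ball] at hxc
    have : δ ≤ (1-ρ)/2 := min_le_left _ _
    linarith
  have hlip := lipschitz_UD hdi hmi (hK hcK) hdist
  have hb1 : 2 / (1 - ‖c‖) * dist x c ≤ 2/(1-ρ) * δ := by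
    apply mul_le_mul
    · apply div_le_div_of_nonneg_left (by norm_num) (by linarith) h1c
    · exact (Metric.mem_ball.mp hxc).le
    · exact dist_nonneg
    · have : (0:ℝ) < 1 - ρ := by linarith
      positivity
  have hb2 : 2/(1-ρ) * δ ≤ ε/4 := by
    have : δ ≤ ε*(1-ρ)/8 := min_le_right _ _
    rw [div_mul_eq_mul_div, div_le_iff₀ (by linarith : (0:ℝ) < 1 - ρ)]
    nlinarith
  have hδε : δ ≤ ε/4 := by
    have : δ ≤ ε*(1-ρ)/8 := min_le_right _ _
    nlinarith
  calc dist x (F i x) ≤ dist x c + dist c (F i c) + dist (F i c) (F i x) := dist_triangle4 _ _ _ _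
    _ < δ + ε/4 + (2 / (1 - ‖c‖) * dist x c) := by
        have := Metric.mem_ball.mp hxc
        have h3 : dist (F i c) (F i x) ≤ 2 / (1 - ‖c‖) * dist x c := by
          rw [dist_comm]; exact hlip
        have h2 : dist c (F i c) < ε/4 := by rw [dist_comm]; exact hci c hct
        rcases lt_or_eq_of_le h3 with h|h
        · linarith
        · linarith
    _ ≤ ε/4 + ε/4 + ε/4 := by linarith
    _ < ε := by linarith

/-- Quantitative surjectivity: a holomorphic map close to the identity covers interior points. -/
lemma mem_image_of_close_id {f : ℂ → ℂ} (hd : DifferentiableOn ℂ f UD)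
    {ρ' ε δ : ℝ} (hρ'  : ρ' < 1) (hε : 0 < ε) (hδ : 2*ε < δ)
    (hcl : ∀ z ∈ Metric.closedBall (0:ℂ) ρ', dist (f z) z ≤ ε)
    {w : ℂ} (hw : ‖w‖ + δ ≤ ρ') : w ∈ f '' UD := by
  have hδ0 : 0 < δ := by linarith
  have hw0 : ‖w‖ ≥ 0 := norm_nonneg w
  have hball : Metric.closedBall w δ ⊆ Metric.closedBall (0:ℂ) ρ' := by
    intro x hx
    rw [Metric.mem_closedBall] at hx ⊢
    calc dist x 0 ≤ dist x w + dist w 0 := dist_triangle _ _ _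
      _ ≤ δ + ‖w‖ := by
          rw [Complex.dist_eq w 0, sub_zero]; linarith
      _ ≤ ρ' := by linarith
  have hballUD : Metric.closedBall w δ ⊆ UD := by
    intro x hx
    rw [mem_UD]
    have := hball hx
    rw [Metric.mem_closedBall, Complex.dist_eq, sub_zero] at this
    linarith
  by_contra hnot
  have hne : ∀ z ∈ UD, f z - w ≠ 0 := by
    intro z hz h
    exact hnot ⟨z, hz, sub_eq_zero.mp h⟩
  -- maximum principle applied to the reciprocal
  have hwUD : w ∈ UD := hballUD (Metric.mem_closedBall_self hδ0.le)
  have hcont : ContinuousOn f UD := hd.continuousOn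
  set g : ℂ → ℂ := fun z => (f z - w)⁻¹ with hg
  have hgd : DiffContOnCl ℂ g (Metric.ball w δ) := by
    constructor
    · apply DifferentiableOn.inv
      · exact (hd.mono ((Metric.ball_subset_closedBall).trans hballUD)).sub
          (differentiableOn_const w)
      · intro z hz
        exact hne z (hballUD (Metric.ball_subset_closedBall hz))
    · rw [closure_ball w hδ0.ne']
      apply ContinuousOn.inv₀
      · exact (hcont.mono hballUD).sub continuousOn_const
      · intro z hz; exact hne z (hballUD hz)
  have hbd : ∀ z ∈ frontier (Metric.ball w δ), ‖g z‖ ≤ 1/(δ - ε) := by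
    rw [frontier_ball w hδ0.ne']
    intro z hz
    have hzUD : z ∈ UD := hballUD (Metric.sphere_subset_closedBall hz)
    have hzρ : z ∈ Metric.closedBall (0:ℂ) ρ' := hball (Metric.sphere_subset_closedBall hz)
    have h1 : dist (f z) z ≤ ε := hcl z hzρ
    have h2 : dist z w = δ := Metric.mem_sphere.mp hz
    have h3 : δ - ε ≤ ‖f z - w‖ := by
      have : dist (f z) w ≥ dist z w - dist (f z) z := by
        have := dist_triangle z (f z) w
        rw [dist_comm z (f z)] at this
        linarith [dist_triangle (f z) z w, abs_sub_abs_le_abs_sub (dist z w) 0]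
      rw [Complex.dist_eq] at this
      linarith
    rw [hg]
    simp only [norm_inv]
    rw [inv_eq_one_div, one_div, one_div]
    apply inv_anti₀ (by linarith) h3
  have hmax := Complex.norm_le_of_forall_mem_frontier_norm_le (isBounded_ball) hgd hbd
    (z := w) (by rw [closure_ball w hδ0.ne']; exact Metric.mem_closedBall_self hδ0.le)
  have hfw : ‖f w - w‖ ≤ ε := by
    have := hcl w (hball (Metric.mem_closedBall_self hδ0.le))
    rwa [Complex.dist_eq] at this
  have hfw0 : 0 < ‖f w - w‖ := by
    have := hne w hwUD
    exact norm_pos_iff.mpr this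
  rw [hg] at hmax
  simp only [norm_inv] at hmax
  have h5 : 1/ε ≤ (‖f w - w‖)⁻¹ := by
    rw [one_div]
    exact inv_anti₀ hfw0 hfw
  have h6 : (1:ℝ)/ε ≤ 1/(δ - ε) := le_trans h5 hmax
  have h7 : δ - ε ≤ ε := by
    rw [div_le_div_iff₀ hε (by linarith)] at h6
    linarith
  linarith

/-- A primitive for an integrable function on `[0,T]`. -/
lemma exists_primitive {T : ℝ} {k : ℝ → ℝ} (hk : MeasureTheory.IntegrableOn k (Set.Icc 0 T)) :
    ∃ Φ : ℝ → ℝ, Continuous Φ ∧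
      ∀ u t : ℝ, 0 ≤ u → u ≤ t → t ≤ T → ∫ ξ in u..t, k ξ = Φ t - Φ u := by
  set k' : ℝ → ℝ := (Set.Icc 0 T).indicator k with hk'
  have hint : MeasureTheory.Integrable k' := by
    rw [hk', MeasureTheory.integrable_indicator_iff measurableSet_Icc]
    exact hk
  refine ⟨fun r => ∫ x in (0:ℝ)..r, k' x, hint.continuous_primitive 0, ?_⟩
  intro u t hu hut htT
  have hcong : ∫ ξ in u..t, k ξ = ∫ ξ in u..t, k' ξ := by
    apply intervalIntegral.integral_congr
    intro x hx
    rw [Set.uIcc_of_le hut] at hx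
    rw [hk', Set.indicator_of_mem]
    exact ⟨le_trans hu hx.1, le_trans hx.2 htT⟩
  rw [hcong]
  rw [eq_sub_iff_add_eq]
  rw [add_comm]
  exact intervalIntegral.integral_add_adjacent_intervals
    hint.intervalIntegrable hint.intervalIntegrable

/-- The inverse of a bijective holomorphic self-map of the disk is holomorphic. -/
lemma inv_holomorphic {φ : ℂ → ℂ} (hd : DifferentiableOn ℂ φ UD) (hbij : BijOn φ UD UD) :
    DifferentiableOn ℂ (invFunOn φ UD) UD ∧ MapsTo (invFunOn φ UD) UD UD ∧
    (∀ w ∈ UD, φ (invFunOn φ UD w) = w) ∧ (∀ z ∈ UD, invFunOn φ UD (φ z) = z) := by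
  set H := invFunOn φ UD with hH
  have hmem : ∀ w ∈ UD, H w ∈ UD := by
    intro w hw
    exact Function.invFunOn_mem (by simpa [Set.image] using hbij.surjOn hw)
  have hright : ∀ w ∈ UD, φ (H w) = w := by
    intro w hw
    exact Function.invFunOn_eq (by simpa [Set.image] using hbij.surjOn hw)
  have hleft : ∀ z ∈ UD, H (φ z) = z := fun z hz => hbij.injOn.leftInvOn_invFunOn hz
  have han : AnalyticOnNhd ℂ φ UD := hd.analyticOnNhd isOpen_UD
  -- φ is nowhere locally constant
  have hnc : ∀ z₀ ∈ UD, ¬(∀ᶠ z in 𝓝 z₀, φ z = φ z₀) := by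
    intro z₀ hz₀ h
    obtain ⟨ε, hε, hball⟩ := Metric.eventually_nhds_iff_ball.mp (h.and (isOpen_UD.eventually_mem hz₀))
    have h1 : 0 < min ε 1 := lt_min hε one_pos
    set y : ℂ := z₀ + (((min ε 1)/2 : ℝ) : ℂ) with hy
    have hymem : y ∈ Metric.ball z₀ ε := by
      rw [Metric.mem_ball, hy, Complex.dist_eq]
      simp only [add_sub_cancel_left]
      rw [Complex.norm_real, Real.norm_eq_abs, abs_of_pos (by linarith)]
      have : min ε 1 ≤ ε := min_le_left _ _
      linarith
    obtain ⟨hφy, hyUD⟩ := hball y hymem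
    have heq : y = z₀ := hbij.injOn hyUD hz₀ (by rw [hφy])
    rw [hy, add_eq_left] at heq
    have : ((min ε 1)/2 : ℝ) = 0 := by exact_mod_cast heq
    linarith
  -- open mapping property
  have hopen : ∀ z₀ ∈ UD, 𝓝 (φ z₀) ≤ Filter.map φ (𝓝 z₀) := by
    intro z₀ hz₀
    rcases (han z₀ hz₀).eventually_constant_or_nhds_le_map_nhds with h | h
    · exact absurd h (hnc z₀ hz₀)
    · exact h
  -- continuity of H
  have hcont : ∀ w ∈ UD, ContinuousAt H w := by
    intro w hw
    have hz₀ : H w ∈ UD := hmem w hw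
    have heq : φ (H w) = w := hright w hw
    rw [ContinuousAt]
    calc Filter.map H (𝓝 w) = Filter.map H (𝓝 (φ (H w))) := by rw [heq]
      _ ≤ Filter.map H (Filter.map φ (𝓝 (H w))) := Filter.map_mono (hopen _ hz₀)
      _ = Filter.map (H ∘ φ) (𝓝 (H w)) := by rw [Filter.map_map]
      _ = Filter.map id (𝓝 (H w)) := by
          apply Filter.map_congr
          filter_upwards [UD_nhds hz₀] with z hz
          exact hleft z hz
      _ = 𝓝 (H w) := Filter.map_id
  -- derivative of φ is nonvanishing on punctured neighborhoods
  have hdnz : ∀ z₀ ∈ UD, ∀ᶠ z in 𝓝[≠] z₀, deriv φ z ≠ 0 := by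
    intro z₀ hz₀
    have hda : AnalyticAt ℂ (deriv φ) z₀ := (by
      have := han.deriv
      exact this z₀ hz₀)
    rcases hda.eventually_eq_zero_or_eventually_ne_zero with h | h
    · exfalso
      -- φ would be locally constant
      obtain ⟨ε, hε, hball⟩ := Metric.eventually_nhds_iff_ball.mp (h.and (isOpen_UD.eventually_mem hz₀))
      apply hnc z₀ hz₀
      rw [Metric.eventually_nhds_iff_ball]
      refine ⟨ε, hε, fun y hy => ?_⟩
      have hconv : Convex ℝ (Metric.ball z₀ ε) := convex_ball z₀ ε
      have hdiff : DifferentiableOn ℂ φ (Metric.ball z₀ ε) :=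
        hd.mono (fun x hx => (hball x hx).2)
      have hzero : ∀ x ∈ Metric.ball z₀ ε, fderivWithin ℂ φ (Metric.ball z₀ ε) x = 0 := by
        intro x hx
        have hdx : DifferentiableAt ℂ φ x := hd.differentiableAt (UD_nhds (hball x hx).2)
        have h0 : deriv φ x = 0 := (hball x hx).1
        have hda : HasDerivAt φ 0 x := h0 ▸ hdx.hasDerivAt
        have hf : HasFDerivAt φ (0 : ℂ →L[ℂ] ℂ) x := by
          have h2 := hasDerivAt_iff_hasFDerivAt.mp hda
          have h00 : (ContinuousLinearMap.smulRight (1 : ℂ →L[ℂ] ℂ) (0:ℂ)) = 0 := by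
            ext x; simp
          simpa using h2
        rw [fderivWithin_of_isOpen Metric.isOpen_ball hx]
        exact hf.fderiv
      exact hconv.is_const_of_fderivWithin_eq_zero hdiff hzero hy (Metric.mem_ball_self hε)
    · exact h
  -- differentiability of H at points with nonvanishing derivative
  have hdiffAt : ∀ w ∈ UD, deriv φ (H w) ≠ 0 → DifferentiableAt ℂ H w := by
    intro w hw hne
    have := HasDerivAt.of_local_left_inverse (hcont w hw)
      ((hd.differentiableAt (UD_nhds (hmem w hw))).hasDerivAt) hne
      (by filter_upwards [UD_nhds hw] with y hy using hright y hy)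
    exact this.differentiableAt
  -- full differentiability via removable singularities
  have hdiffOn : DifferentiableOn ℂ H UD := by
    intro w hw
    have hz₀ : H w ∈ UD := hmem w hw
    have htend : Tendsto H (𝓝[≠] w) (𝓝[≠] (H w)) := by
      rw [tendsto_nhdsWithin_iff]
      constructor
      · exact ((hcont w hw).tendsto).mono_left nhdsWithin_le_nhds
      · filter_upwards [(nhdsWithin_le_nhds : 𝓝[≠] w ≤ 𝓝 w) (UD_nhds hw),
          eventually_mem_nhdsWithin] with y hyUD hyne
        show H y ∈ {x | x ≠ H w}
        intro hHy
        exact hyne (show y ∈ ({w} : Set ℂ) from by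
          rw [← hright y hyUD, hHy, hright w hw]; exact rfl)
    have hev : ∀ᶠ y in 𝓝[≠] w, DifferentiableAt ℂ H y := by
      filter_upwards [htend.eventually (hdnz (H w) hz₀),
        eventually_nhdsWithin_of_eventually_nhds (UD_nhds hw)] with y h1 h2
      exact hdiffAt y h2 h1
    have := analyticAt_of_differentiable_on_punctured_nhds_of_continuousAt hev (hcont w hw)
    exact this.differentiableAt.differentiableWithinAt
  exact ⟨hdiffOn, fun w hw => hmem w hw, hright, hleft⟩

/-- A (continuous) evolution family in the unit disk: a two-parameter family of
holomorphic self-maps of `𝔻` satisfying the algebraic identities and a local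
absolute-continuity condition; its members are univalent (taken here as a standing
hypothesis). -/
structure EvolutionFamilyUD where
  φ : ℝ → ℝ → ℂ → ℂ
  mapsTo : ∀ ⦃s t : ℝ⦄, 0 ≤ s → s ≤ t → Set.MapsTo (φ s t) UD UD
  holo : ∀ ⦃s t : ℝ⦄, 0 ≤ s → s ≤ t → DifferentiableOn ℂ (φ s t) UD
  id_eq : ∀ ⦃s : ℝ⦄, 0 ≤ s → ∀ z ∈ UD, φ s s z = z
  comp : ∀ ⦃s u t : ℝ⦄, 0 ≤ s → s ≤ u → u ≤ t → ∀ z ∈ UD,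
    φ s t z = φ u t (φ s u z)
  inj : ∀ ⦃s t : ℝ⦄, 0 ≤ s → s ≤ t → Set.InjOn (φ s t) UD
  ac : ∀ z ∈ UD, ∀ T : ℝ, 0 < T →
    ∃ k : ℝ → ℝ, (∀ ξ, 0 ≤ k ξ) ∧ MeasureTheory.IntegrableOn k (Set.Icc 0 T) ∧
      ∀ ⦃s u t : ℝ⦄, 0 ≤ s → s ≤ u → u ≤ t → t ≤ T →
        ‖φ s u z - φ s t z‖ ≤ ∫ ξ in u..t, k ξ

/-- Pointwise convergence `φ_{r,α} z → z` as `r → α⁻`. -/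
lemma tendsto_left (E : EvolutionFamilyUD) {α : ℝ} (hα : 0 < α) {z : ℂ} (hz : z ∈ UD) :
    Tendsto (fun r => E.φ r α z) (𝓝[<] α) (𝓝 z) := by
  obtain ⟨k, hk0, hkint, hkb⟩ := E.ac z hz α hα
  obtain ⟨Φ, hΦc, hΦ⟩ := exists_primitive hkint
  rw [tendsto_iff_dist_tendsto_zero]
  have hev : Ioo 0 α ∈ 𝓝[<] α := Ioo_mem_nhdsLT_of_mem ⟨hα, le_rfl⟩
  refine squeeze_zero' (g := fun r => Φ α - Φ r)
    (Filter.Eventually.of_forall (fun r => dist_nonneg)) ?_ ?_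
  · filter_upwards [hev] with r hr
    have h1 := hkb (le_of_lt hr.1) le_rfl hr.2.le le_rfl
    rw [E.id_eq (le_of_lt hr.1) z hz] at h1
    rw [hΦ r α (le_of_lt hr.1) hr.2.le le_rfl] at h1
    rw [dist_comm, Complex.dist_eq]
    exact h1
  · have h2 : Tendsto (fun r => Φ α - Φ r) (𝓝 α) (𝓝 (Φ α - Φ α)) :=
      (continuous_const.sub hΦc).tendsto α
    rw [sub_self] at h2
    exact h2.mono_left nhdsWithin_le_nhds

/-- Pointwise convergence `φ_{α,b} z → z` as `b → α⁺`. -/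
lemma tendsto_right (E : EvolutionFamilyUD) {α : ℝ} (hα : 0 ≤ α) {z : ℂ} (hz : z ∈ UD) :
    Tendsto (fun b => E.φ α b z) (𝓝[>] α) (𝓝 z) := by
  obtain ⟨k, hk0, hkint, hkb⟩ := E.ac z hz (α+1) (by linarith)
  obtain ⟨Φ, hΦc, hΦ⟩ := exists_primitive hkint
  rw [tendsto_iff_dist_tendsto_zero]
  have hev : Ioo α (α+1) ∈ 𝓝[>] α := Ioo_mem_nhdsGT_of_mem ⟨le_rfl, by linarith⟩
  refine squeeze_zero' (g := fun b => Φ b - Φ α)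
    (Filter.Eventually.of_forall (fun r => dist_nonneg)) ?_ ?_
  · filter_upwards [hev] with b hb
    have h1 := hkb hα le_rfl hb.1.le hb.2.le
    rw [E.id_eq hα z hz] at h1
    rw [hΦ α b hα hb.1.le (by linarith [hb.2])] at h1
    rw [dist_comm, Complex.dist_eq]
    exact h1
  · have h2 : Tendsto (fun b => Φ b - Φ α) (𝓝 α) (𝓝 (Φ α - Φ α)) :=
      (hΦc.sub continuous_const).tendsto α
    rw [sub_self] at h2
    exact h2.mono_left nhdsWithin_le_nhds

/-- For an evolution family in `𝔻`, either for every `s ≥ 0` the set of times `t ≥ s` at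
which `φ_{s,t}` is an automorphism of `𝔻` is bounded above, or there exists `α ≥ 0` such
that `φ_{s,t} ∈ Aut(𝔻)` whenever `α ≤ s ≤ t` and, if `α > 0`, the maps `h_r := φ_{r,α}`
(`0 ≤ r < α`) are never automorphisms, converge locally uniformly to the identity as
`r → α⁻`, and satisfy `φ_{r,t} = φ_{α,t} ∘ h_r` for `0 ≤ r < α ≤ t`. -/
theorem evolutionFamilyUD_automorphism_dichotomy (E : EvolutionFamilyUD) :
    (∀ s : ℝ, 0 ≤ s → BddAbove {t : ℝ | s ≤ t ∧ Set.BijOn (E.φ s t) UD UD}) ∨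
    (∃ α : ℝ, 0 ≤ α ∧
      (∀ s t : ℝ, α ≤ s → s ≤ t → Set.BijOn (E.φ s t) UD UD) ∧
      (0 < α →
        (∀ r : ℝ, 0 ≤ r → r < α → ¬ Set.BijOn (E.φ r α) UD UD) ∧
        (∀ K : Set ℂ, K ⊆ UD → IsCompact K →
          TendstoUniformlyOn (fun r z => E.φ r α z) (fun z => z) (𝓝[<] α) K) ∧
        (∀ r t : ℝ, 0 ≤ r → r < α → α ≤ t → ∀ z ∈ UD,
          E.φ r t z = E.φ α t (E.φ r α z)))) := by
  by_cases hL : ∀ s : ℝ, 0 ≤ s → BddAbove {t : ℝ | s ≤ t ∧ Set.BijOn (E.φ s t) UD UD}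
  · exact Or.inl hL
  right
  push_neg at hL
  obtain ⟨s₀, hs₀0, hs₀⟩ := hL
  -- splitting lemma
  have split3 : ∀ {a s t T : ℝ}, 0 ≤ a → a ≤ s → s ≤ t → t ≤ T →
      Set.BijOn (E.φ a T) UD UD → Set.BijOn (E.φ s t) UD UD := by
    intro a s t T ha has hst htT hbij
    have h1 : ∀ z ∈ UD, E.φ a T z = E.φ t T (E.φ a t z) :=
      E.comp ha (has.trans hst) htT
    have h2 := bijOn_split h1 (E.mapsTo ha (has.trans hst))
      (E.inj (ha.trans (has.trans hst)) htT) (E.mapsTo (ha.trans (has.trans hst)) htT) hbij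
    have h3 : ∀ z ∈ UD, E.φ a t z = E.φ s t (E.φ a s z) := E.comp ha has hst
    exact (bijOn_split h3 (E.mapsTo ha has) (E.inj (ha.trans has) hst)
      (E.mapsTo (ha.trans has) hst) h2.1).2
  -- the set of good starting times
  set G : Set ℝ := {a : ℝ | 0 ≤ a ∧ ∀ s t : ℝ, a ≤ s → s ≤ t →
    Set.BijOn (E.φ s t) UD UD} with hG
  have hs₀G : s₀ ∈ G := by
    refine ⟨hs₀0, fun s t hs hst => ?_⟩
    obtain ⟨T, hTmem, hTgt⟩ := not_bddAbove_iff.mp hs₀ t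
    exact split3 hs₀0 hs hst hTgt.le hTmem.2
  have hGne : G.Nonempty := ⟨s₀, hs₀G⟩
  have hGbdd : BddBelow G := ⟨0, fun x hx => hx.1⟩
  set α : ℝ := sInf G with hα
  have hα0 : 0 ≤ α := le_csInf hGne (fun x hx => hx.1)
  have htail : ∀ β : ℝ, α < β → β ∈ G := by
    intro β hβ
    obtain ⟨a, haG, hab⟩ := exists_lt_of_csInf_lt hGne hβ
    exact ⟨haG.1.trans hab.le, fun s t hβs hst => haG.2 s t (hab.le.trans hβs) hst⟩
  -- identity is a bijection
  have hid : ∀ {s : ℝ}, 0 ≤ s → Set.BijOn (E.φ s s) UD UD := by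
    intro s hs
    refine ⟨E.mapsTo hs le_rfl, E.inj hs le_rfl, fun w hw => ⟨w, hw, E.id_eq hs w hw⟩⟩
  -- THE CORE: φ_{α, α+1} is surjective
  set t₀ : ℝ := α + 1 with ht₀
  have ht₀gt : α < t₀ := by rw [ht₀]; linarith
  have hsurj : Set.SurjOn (E.φ α t₀) UD UD := by
    intro w hw
    set w₀ : ℂ := E.φ α t₀ 0 with hw₀
    have hw₀UD : w₀ ∈ UD := E.mapsTo hα0 ht₀gt.le zero_mem_UD
    set c : ℝ := ‖mob w₀ w‖ with hc
    have hc1 : c < 1 := mem_UD.1 (mob_mem hw₀UD hw)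
    have hc0 : 0 ≤ c := norm_nonneg _
    set m : ℝ := (1-c)/(2*(1+c)) with hm
    have h1c : (0:ℝ) < 1 + c := by linarith
    have hm0 : 0 < m := by
      rw [hm]
      have : (0:ℝ) < 1 - c := by linarith
      positivity
    have hm12 : m ≤ 1/2 := by
      rw [hm, div_le_div_iff₀ (by linarith) (by norm_num)]
      nlinarith
    have hcm : c * m < 1 := by nlinarith
    have hkey : m * (1+c) = (1-c)/2 := by
      rw [hm]; field_simp
    set ρ₁ : ℝ := (m+c)/(1-c*m) with hρ₁
    have hρ₁0 : 0 ≤ ρ₁ := by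
      rw [hρ₁]
      have : (0:ℝ) < 1 - c*m := by linarith
      positivity
    have hρ₁1 : ρ₁ < 1 := by
      rw [hρ₁, div_lt_one (by linarith)]
      nlinarith
    set ρ' : ℝ := (1+ρ₁)/2 with hρ'
    have hρ'1 : ρ' < 1 := by rw [hρ']; linarith
    set δ : ℝ := ρ' - ρ₁ with hδ
    have hδ0 : 0 < δ := by rw [hδ, hρ']; linarith
    set ε : ℝ := δ/4 with hε
    have hε0 : 0 < ε := by rw [hε]; linarith
    have hKsub : Metric.closedBall (0:ℂ) ρ' ⊆ UD := by
      intro z hz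
      rw [Metric.mem_closedBall, Complex.dist_eq, sub_zero] at hz
      rw [mem_UD]; linarith
    have huc : TendstoUniformlyOn (fun b z => E.φ α b z) (fun z => z) (𝓝[>] α)
        (Metric.closedBall (0:ℂ) ρ') := by
      apply tendstoUniformlyOn_of_pointwise _ _ hKsub (isCompact_closedBall 0 ρ')
      · filter_upwards [self_mem_nhdsWithin] with b hb
        exact ⟨E.holo hα0 (le_of_lt hb), E.mapsTo hα0 (le_of_lt hb)⟩
      · exact fun z hz => tendsto_right E hα0 hz
    have hevsup := (Metric.tendstoUniformlyOn_iff.mp huc) ε hε0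
    have hev0 : ∀ᶠ b in 𝓝[>] α, dist (E.φ α b 0) 0 < m :=
      (Metric.tendsto_nhds.mp (tendsto_right E hα0 zero_mem_UD)) m hm0
    have hevI : Ioo α t₀ ∈ 𝓝[>] α := Ioo_mem_nhdsGT_of_mem ⟨le_rfl, ht₀gt⟩
    obtain ⟨b, hbsup, hbq, hbI⟩ := (hevsup.and (hev0.and hevI)).exists
    have hαb : α < b := hbI.1
    have hbt₀ : b ≤ t₀ := hbI.2.le
    have hb0 : (0:ℝ) ≤ b := hα0.trans hαb.le
    have hbbij : Set.BijOn (E.φ b t₀) UD UD := (htail b hαb).2 b t₀ le_rfl hbt₀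
    obtain ⟨Hdiff, Hmaps, Hright, Hleft⟩ := inv_holomorphic (E.holo hb0 hbt₀) hbbij
    set H := invFunOn (E.φ b t₀) UD with hH
    set q : ℂ := E.φ α b 0 with hq
    have hqUD : q ∈ UD := E.mapsTo hα0 hαb.le zero_mem_UD
    have hqm : ‖q‖ ≤ m := by
      have := hbq
      rw [Complex.dist_eq, sub_zero] at this
      exact this.le
    have hHw₀ : H w₀ = q := by
      apply hbbij.injOn (Hmaps hw₀UD) hqUD
      rw [Hright w₀ hw₀UD, hw₀, hq]
      exact E.comp hα0 hαb.le hbt₀ 0 zero_mem_UD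
    have hSP : ‖mob q (H w)‖ ≤ c := by
      have := schwarz_pick Hdiff Hmaps hw₀UD hw
      rwa [hHw₀, ← hc] at this
    have hHwUD : H w ∈ UD := Hmaps hw
    have habsHw : ‖H w‖ ≤ ρ₁ := abs_le_of_mob_le hqUD hHwUD hSP hqm hc0 hcm
    have hcl : ∀ z ∈ Metric.closedBall (0:ℂ) ρ', dist (E.φ α b z) z ≤ ε := by
      intro z hz
      rw [dist_comm]
      exact (hbsup z hz).le
    have hcov : H w ∈ (E.φ α b) '' UD := by
      apply mem_image_of_close_id (E.holo hα0 hαb.le) (δ := δ) hρ'1 hε0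
        (by linarith [hδ0, hε]) hcl
      linarith [habsHw, hδ]
    obtain ⟨x, hxUD, hφx⟩ := hcov
    refine ⟨x, hxUD, ?_⟩
    rw [E.comp hα0 hαb.le hbt₀ x hxUD, hφx, Hright w hw]
  -- α is a good starting time
  have ht₀0 : 0 ≤ t₀ := hα0.trans ht₀gt.le
  have hAαt₀ : Set.BijOn (E.φ α t₀) UD UD := ⟨E.mapsTo hα0 ht₀gt.le, E.inj hα0 ht₀gt.le, hsurj⟩
  have hαG : ∀ s t : ℝ, α ≤ s → s ≤ t → Set.BijOn (E.φ s t) UD UD := by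
    intro s t hαs hst
    rcases eq_or_lt_of_le hαs with rfl | hlt
    · rcases eq_or_lt_of_le hst with rfl | hlt'
      · exact hid hα0
      · rcases le_total t t₀ with h | h
        · have h3 : ∀ z ∈ UD, E.φ α t₀ z = E.φ t t₀ (E.φ α t z) := E.comp hα0 hlt'.le h
          exact (bijOn_split h3 (E.mapsTo hα0 hlt'.le) (E.inj (hα0.trans hlt'.le) h)
            (E.mapsTo (hα0.trans hlt'.le) h) hAαt₀).1
        · have hbij2 : Set.BijOn (E.φ t₀ t) UD UD := (htail t₀ ht₀gt).2 t₀ t le_rfl h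
          apply (hbij2.comp hAαt₀).congr
          intro z hz
          exact (E.comp hα0 ht₀gt.le h z hz).symm
    · exact (htail s hlt).2 s t le_rfl hst
  refine ⟨α, hα0, hαG, fun hαpos => ⟨?_, ?_, ?_⟩⟩
  · -- not automorphisms before α
    intro r hr0 hrα hbij
    have hrG : r ∈ G := by
      refine ⟨hr0, fun s t hrs hst => ?_⟩
      set T : ℝ := max t α with hT
      have hαT : α ≤ T := le_max_right _ _
      have htT : t ≤ T := le_max_left _ _
      have hbijαT : Set.BijOn (E.φ α T) UD UD := hαG α T le_rfl hαT
      have hbijrT : Set.BijOn (E.φ r T) UD UD := by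
        apply (hbijαT.comp hbij).congr
        intro z hz
        exact (E.comp hr0 hrα.le hαT z hz).symm
      exact split3 hr0 hrs hst htT hbijrT
    have : α ≤ r := csInf_le hGbdd hrG
    linarith
  · -- uniform convergence on compacts
    intro K hK hKc
    apply tendstoUniformlyOn_of_pointwise _ _ hK hKc
    · have hev : Ioo 0 α ∈ 𝓝[<] α := Ioo_mem_nhdsLT_of_mem ⟨hαpos, le_rfl⟩
      filter_upwards [hev] with r hr
      exact ⟨E.holo hr.1.le hr.2.le, E.mapsTo hr.1.le hr.2.le⟩
    · exact fun z hz => tendsto_left E hαpos hz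
  · -- composition identity
    intro r t hr0 hrα hαt z hz
    exact E.comp hr0 hrα.le hαt z hz
end

section
/- Let (φ_{s,t}) be a non-trivial evolution family in 𝔻 with common Denjoy–Wolff point τ, |τ| = 1. Say that the trajectory starting at (s,z) converges to τ non-tangentially if φ_{s,t}(z) → τ as t → +∞ and there exists α ∈ (0, π/2) such that |Arg(1 − conj(τ)·φ_{s,t}(z))| < α for all t ≥ s (i.e. the whole trajectory lies in the Stolz angle S_α = { w ∈ 𝔻 : |Arg(1 − conj(τ)·w)| < α }). Then the following are equivalent: (1) there exist z ∈ 𝔻 and s ≥ 0 such that the trajectory starting at (s,z) converges to τ non-tangentially; (2) for every z ∈ 𝔻 and every s ≥ 0 the trajectory starting at (s,z) converges to τ non-tangentially. -/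
open Complex MeasureTheory Set Filter Topology

/-- An evolution family in the unit disk with common Denjoy-Wolff point `τ`, i.e. whose
associated vector field has the Berkson-Porta form
`G(z,t) = (z − τ)(conj τ · z − 1) p(z,t)` with `p` a generalized Herglotz function. -/
structure EvolutionFamilyDisk (τ : ℂ) where
  φ : ℝ → ℝ → ℂ → ℂ
  p : ℂ → ℝ → ℂ
  mapsTo : ∀ ⦃s t : ℝ⦄, 0 ≤ s → s ≤ t → Set.MapsTo (φ s t) UD UD
  holo : ∀ ⦃s t : ℝ⦄, 0 ≤ s → s ≤ t → DifferentiableOn ℂ (φ s t) UD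
  id_eq : ∀ ⦃s : ℝ⦄, 0 ≤ s → ∀ z ∈ UD, φ s s z = z
  comp : ∀ ⦃s u t : ℝ⦄, 0 ≤ s → s ≤ u → u ≤ t → ∀ z ∈ UD,
    φ s t z = φ u t (φ s u z)
  p_meas : ∀ z ∈ UD, Measurable (p z)
  p_holo : ∀ t : ℝ, 0 ≤ t → DifferentiableOn ℂ (fun z => p z t) UD
  p_re_nonneg : ∀ z ∈ UD, ∀ t : ℝ, 0 ≤ t → 0 ≤ (p z t).re
  G_bound : ∀ K : Set ℂ, K ⊆ UD → IsCompact K → ∀ T : ℝ, 0 < T →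
    ∃ k : ℝ → ℝ, (∀ t, 0 ≤ k t) ∧ MeasureTheory.IntegrableOn k (Set.Icc 0 T) ∧
      ∀ z ∈ K, ∀ᵐ t ∂(MeasureTheory.volume.restrict (Set.Icc (0:ℝ) T)),
        ‖(z - τ) * ((starRingEnd ℂ) τ * z - 1) * p z t‖ ≤ k t
  integral_eq : ∀ ⦃s t : ℝ⦄, 0 ≤ s → s ≤ t → ∀ z ∈ UD,
    φ s t z = z + ∫ ξ in s..t,
      (φ s ξ z - τ) * ((starRingEnd ℂ) τ * φ s ξ z - 1) * p (φ s ξ z) ξ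

/-- The family is non-trivial if some `φ_{s,t}`, `s < t`, is not the identity of `𝔻`. -/
def EvolutionFamilyDisk.Nontrivial {τ : ℂ} (E : EvolutionFamilyDisk τ) : Prop :=
  ∃ s t : ℝ, 0 ≤ s ∧ s < t ∧ ∃ z ∈ UD, E.φ s t z ≠ z

/-- The ω-limit (in `ℂ`) of the trajectory `t ↦ φ_{s,t}(z)`. -/
def omegaLimitDisk {τ : ℂ} (E : EvolutionFamilyDisk τ) (s : ℝ) (z : ℂ) : Set ℂ :=
  {q : ℂ | ∃ tn : ℕ → ℝ, Tendsto tn atTop atTop ∧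
    Tendsto (fun n => E.φ s (tn n) z) atTop (𝓝 q)}
/-- The trajectory starting at `(s,z)` converges to `τ` non-tangentially: it tends to `τ`
and stays in some Stolz angle `S_α = {w ∈ 𝔻 : |Arg(1 − conj τ · w)| < α}` at `τ`. -/
def ConvergesNonTangentially {τ : ℂ} (E : EvolutionFamilyDisk τ) (s : ℝ) (z : ℂ) :
    Prop :=
  Tendsto (fun t => E.φ s t z) atTop (𝓝 τ) ∧
  ∃ α : ℝ, 0 < α ∧ α < Real.pi / 2 ∧
    ∀ t : ℝ, s ≤ t → |Complex.arg (1 - (starRingEnd ℂ) τ * E.φ s t z)| < α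


noncomputable def moeb (a z : ℂ) : ℂ := (z - a) / (1 - (starRingEnd ℂ) a * z)

lemma normSq_key (a z : ℂ) :
    Complex.normSq (1 - (starRingEnd ℂ) a * z) - Complex.normSq (z - a) =
      (1 - Complex.normSq a) * (1 - Complex.normSq z) := by
  simp only [Complex.normSq_apply, Complex.sub_re, Complex.sub_im, Complex.one_re,
    Complex.one_im, Complex.mul_re, Complex.mul_im, Complex.conj_re, Complex.conj_im]
  ring

lemma den_ne_zero {a z : ℂ} (ha : ‖a‖ < 1) (hz : ‖z‖ < 1) :
    (1 : ℂ) - (starRingEnd ℂ) a * z ≠ 0 := by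
  intro h
  have h1 : ‖(starRingEnd ℂ) a * z‖ < 1 := by
    rw [norm_mul, Complex.norm_conj]
    nlinarith [norm_nonneg a, norm_nonneg z]
  have h2 : (starRingEnd ℂ) a * z = 1 := by linear_combination -h
  rw [h2] at h1; simp at h1

lemma moeb_abs_lt_one {a z : ℂ} (ha : ‖a‖ < 1) (hz : ‖z‖ < 1) :
    ‖moeb a z‖ < 1 := by
  have hd := den_ne_zero ha hz
  have hdpos : 0 < ‖1 - (starRingEnd ℂ) a * z‖ := by
    simpa [norm_pos_iff] using hd
  rw [moeb, norm_div, div_lt_one hdpos]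
  have key := normSq_key a z
  have h1 : Complex.normSq a < 1 := by rw [← Complex.sq_norm]; nlinarith [norm_nonneg a]
  have h2 : Complex.normSq z < 1 := by rw [← Complex.sq_norm]; nlinarith [norm_nonneg z]
  have h3 : Complex.normSq (z - a) < Complex.normSq (1 - (starRingEnd ℂ) a * z) := by nlinarith
  rw [← Complex.sq_norm, ← Complex.sq_norm] at h3
  have h4 := norm_nonneg (z - a)
  nlinarith

lemma moeb_inv {a z : ℂ} (ha : ‖a‖ < 1) (hz : ‖z‖ < 1) :
    moeb (-a) (moeb a z) = z := by
  have hd := den_ne_zero ha hz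
  have hu : (1 : ℂ) - (starRingEnd ℂ) a * a ≠ 0 := den_ne_zero ha ha
  have e1 : moeb a z + a = z * (1 - (starRingEnd ℂ) a * a) / (1 - (starRingEnd ℂ) a * z) := by
    rw [moeb, eq_div_iff hd, add_mul, div_mul_cancel₀ _ hd]; ring
  have e2 : (1 : ℂ) + (starRingEnd ℂ) a * moeb a z
      = (1 - (starRingEnd ℂ) a * a) / (1 - (starRingEnd ℂ) a * z) := by
    rw [moeb]; field_simp; ring
  have e3 : moeb (-a) (moeb a z)
      = (moeb a z + a) / (1 + (starRingEnd ℂ) a * moeb a z) := by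
    rw [moeb, map_neg]; ring_nf
  rw [e3, e1, e2]
  rw [div_div_div_cancel_right₀]
  · exact mul_div_cancel_right₀ z hu
  · exact hd

lemma UD_eq_ball : UD = Metric.ball (0 : ℂ) 1 := by
  ext z; simp [UD, Metric.mem_ball, Complex.dist_eq]

lemma moeb_diffOn {a : ℂ} (ha : ‖a‖ < 1) :
    DifferentiableOn ℂ (moeb a) UD := by
  apply DifferentiableOn.div
  · exact (differentiable_id.sub_const a).differentiableOn
  · exact ((differentiable_const _).mul differentiable_id).const_sub 1 |>.differentiableOn
  · intro z hz; exact den_ne_zero ha hz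

lemma moeb_mapsTo {a : ℂ} (ha : ‖a‖ < 1) : Set.MapsTo (moeb a) UD UD :=
  fun z hz => moeb_abs_lt_one ha hz

lemma schwarz_pick_s16 {f : ℂ → ℂ} (hd : DifferentiableOn ℂ f UD) (hm : Set.MapsTo f UD UD)
    {a z : ℂ} (ha : a ∈ UD) (hz : z ∈ UD) :
    ‖moeb (f a) (f z)‖ ≤ ‖moeb a z‖ := by
  have ha' : ‖a‖ < 1 := ha
  have hz' : ‖z‖ < 1 := hz
  have hfa : f a ∈ UD := hm ha
  have hna : ‖-a‖ < 1 := by simpa using ha'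
  set h : ℂ → ℂ := fun w => moeb (f a) (f (moeb (-a) w)) with hh
  have hmaps : Set.MapsTo h UD UD := fun w hw =>
    moeb_abs_lt_one hfa (hm (moeb_abs_lt_one hna hw))
  have hdiff : DifferentiableOn ℂ h UD := by
    apply DifferentiableOn.comp (moeb_diffOn hfa)
    · exact DifferentiableOn.comp hd (moeb_diffOn hna) (moeb_mapsTo hna)
    · exact fun w hw => hm (moeb_abs_lt_one hna hw)
  have h0 : h 0 = 0 := by
    have : moeb (-a) 0 = a := by simp [moeb]
    simp only [hh, this]
    simp [moeb, sub_self]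
  have key : ‖h (moeb a z)‖ ≤ ‖moeb a z‖ := by
    rw [UD_eq_ball] at hdiff hmaps
    exact Complex.norm_le_norm_of_mapsTo_ball hdiff (hmaps.mono_right Metric.ball_subset_closedBall) h0 (moeb_abs_lt_one ha' hz')
  have : h (moeb a z) = moeb (f a) (f z) := by
    simp only [hh, moeb_inv ha' hz']
  rwa [this] at key

lemma arg_le_arccos {v : ℂ} {ε : ℝ} (hε : 0 < ε) (hv : v ≠ 0)
    (h : ε * ‖v‖ ≤ v.re) : |Complex.arg v| ≤ Real.arccos ε := by
  have hav : 0 < ‖v‖ := norm_pos_iff.mpr hv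
  have hε1 : ε ≤ 1 := by
    have : v.re ≤ ‖v‖ := Complex.re_le_norm v
    nlinarith
  by_contra hlt
  push_neg at hlt
  have h1 : Real.cos |Complex.arg v| < Real.cos (Real.arccos ε) := by
    apply Real.cos_lt_cos_of_nonneg_of_le_pi (Real.arccos_nonneg ε) _ hlt
    exact (Complex.abs_arg_le_pi v)
  rw [Real.cos_arccos (by linarith) hε1] at h1
  rw [Real.cos_abs, Complex.cos_arg hv] at h1
  rw [div_lt_iff₀ hav] at h1
  linarith

lemma arg_le_of_abs_le {τ u : ℂ} {r : ℝ} (hτ : ‖τ‖ = 1)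
    (hr : r < 1) (hu : ‖u‖ ≤ r) :
    |Complex.arg (1 - (starRingEnd ℂ) τ * u)| ≤ Real.arccos ((1 - r) / 2) := by
  have hr0 : 0 ≤ r := le_trans (norm_nonneg u) hu
  set v := 1 - (starRingEnd ℂ) τ * u with hv
  have habs : ‖(starRingEnd ℂ) τ * u‖ ≤ r := by
    rw [norm_mul, Complex.norm_conj, hτ, one_mul]; exact hu
  have hre : 1 - r ≤ v.re := by
    have : ((starRingEnd ℂ) τ * u).re ≤ r :=
      le_trans (Complex.re_le_norm _) habs
    simp only [hv, Complex.sub_re, Complex.one_re]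
    linarith
  have hvabs : ‖v‖ ≤ 2 := by
    calc ‖v‖ ≤ ‖(1 : ℂ)‖ + ‖(starRingEnd ℂ) τ * u‖ := by
          simpa [hv, sub_eq_add_neg] using norm_add_le 1 (-((starRingEnd ℂ) τ * u))
    _ ≤ 1 + r := by rw [norm_one]; linarith
    _ ≤ 2 := by linarith
  apply arg_le_arccos (by linarith) _ _
  · intro h0
    rw [h0] at hre; simp at hre; linarith
  · nlinarith

lemma one_sub_abs_le (x : ℂ) : 1 - ‖x‖ ≤ ‖1 - x‖ := by
  have := norm_add_le (1 - x) x
  simp only [sub_add_cancel, norm_one] at this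
  linarith

set_option maxHeartbeats 2000000 in
lemma stolz_transfer {α c : ℝ} (hα0 : 0 < α) (hαπ : α < Real.pi / 2)
    (hc0 : 0 ≤ c) (hc1 : c < 1) :
    ∃ ε : ℝ, 0 < ε ∧ ε ≤ 1 ∧ ∀ (τ γ u : ℂ), ‖τ‖ = 1 → ‖γ‖ < 1 →
      ‖u‖ < 1 → |Complex.arg (1 - (starRingEnd ℂ) τ * γ)| < α →
      ‖u - γ‖ ≤ c * ‖1 - (starRingEnd ℂ) γ * u‖ →
      ε * ‖1 - (starRingEnd ℂ) τ * u‖ ≤ (1 - (starRingEnd ℂ) τ * u).re := by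
  have hcos : 0 < Real.cos α := Real.cos_pos_of_mem_Ioo ⟨by linarith, hαπ⟩
  have hcos1 : Real.cos α ≤ 1 := Real.cos_le_one α
  obtain ⟨K, hK0, hKdef⟩ : ∃ K : ℝ, 0 ≤ K ∧ K = 2 * c / (1 - c) :=
    ⟨_, div_nonneg (by linarith) (by linarith), rfl⟩
  obtain ⟨η, hη0, hηdef⟩ : ∃ η : ℝ, 0 < η ∧ η = (1 - c ^ 2) / 4 :=
    ⟨_, by nlinarith, rfl⟩
  obtain ⟨M, hM0, hMc⟩ : ∃ M : ℝ, 0 < M ∧ M * Real.cos α = 2 * K + 2 :=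
    ⟨(2 * K + 2) / Real.cos α, div_pos (by linarith) hcos, by field_simp⟩
  refine ⟨min (Real.cos α / 4) (η / (M + K)), lt_min (by linarith) (div_pos hη0 (by linarith)),
    le_trans (min_le_left _ _) (by linarith), ?_⟩
  intro τ γ u hτ hγ hu harg hρ
  set w : ℂ := 1 - (starRingEnd ℂ) τ * γ with hw
  set w' : ℂ := 1 - (starRingEnd ℂ) τ * u with hw'
  clear_value w w'
  have hD0 : 0 < 1 - ‖γ‖ := by linarith
  have hd0 : 0 ≤ ‖u - γ‖ := norm_nonneg _
  have habs_conj_γu : ‖(starRingEnd ℂ) γ * u‖ ≤ ‖γ‖ := by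
    rw [norm_mul, Complex.norm_conj]
    nlinarith [norm_nonneg γ, norm_nonneg u]
  have hlow : 1 - ‖γ‖ ≤ ‖1 - (starRingEnd ℂ) γ * u‖ := by
    have := one_sub_abs_le ((starRingEnd ℂ) γ * u)
    linarith
  have hup : ‖1 - (starRingEnd ℂ) γ * u‖
      ≤ (1 - ‖γ‖ ^ 2) + ‖u - γ‖ := by
    have hid : (1 : ℂ) - (starRingEnd ℂ) γ * u
        = (1 - (starRingEnd ℂ) γ * γ) + (starRingEnd ℂ) γ * (γ - u) := by ring
    have h1 : (1 : ℂ) - (starRingEnd ℂ) γ * γ = ((1 - ‖γ‖ ^ 2 : ℝ) : ℂ) := by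
      rw [mul_comm, Complex.mul_conj, ← Complex.sq_norm]
      push_cast; ring
    have h2 : ‖1 - (starRingEnd ℂ) γ * γ‖ = 1 - ‖γ‖ ^ 2 := by
      rw [h1, Complex.norm_real, Real.norm_eq_abs, _root_.abs_of_nonneg]
      nlinarith [norm_nonneg γ]
    have h3 : ‖(starRingEnd ℂ) γ * (γ - u)‖ ≤ ‖u - γ‖ := by
      rw [norm_mul, Complex.norm_conj, ← norm_neg (u - γ), neg_sub]
      nlinarith [norm_nonneg (γ - u), norm_nonneg γ]
    calc ‖1 - (starRingEnd ℂ) γ * u‖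
        ≤ ‖1 - (starRingEnd ℂ) γ * γ‖
          + ‖(starRingEnd ℂ) γ * (γ - u)‖ := by
          rw [hid]; exact norm_add_le _ _
      _ ≤ (1 - ‖γ‖ ^ 2) + ‖u - γ‖ := by rw [h2]; linarith
  have hdK : ‖u - γ‖ ≤ K * (1 - ‖γ‖) := by
    have h1 : ‖u - γ‖
        ≤ c * ((1 - ‖γ‖ ^ 2) + ‖u - γ‖) :=
      le_trans hρ (by nlinarith)
    have h3 : ‖u - γ‖ * (1 - c) ≤ c * (2 * (1 - ‖γ‖)) := by
      nlinarith [mul_nonneg (mul_nonneg hc0 hD0.le) hD0.le]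
    rw [hKdef, div_mul_eq_mul_div, le_div_iff₀ (by linarith)]
    nlinarith [mul_nonneg (mul_nonneg hc0 hD0.le) hD0.le]
  have hηD : η * (1 - ‖γ‖) ≤ 1 - ‖u‖ := by
    have key := normSq_key γ u
    have e1 : Complex.normSq (1 - (starRingEnd ℂ) γ * u)
        = ‖1 - (starRingEnd ℂ) γ * u‖ ^ 2 := (Complex.sq_norm _).symm
    have e2 : Complex.normSq (u - γ) = ‖u - γ‖ ^ 2 := (Complex.sq_norm _).symm
    have e3 : Complex.normSq γ = ‖γ‖ ^ 2 := (Complex.sq_norm _).symm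
    have e4 : Complex.normSq u = ‖u‖ ^ 2 := (Complex.sq_norm _).symm
    rw [e1, e2, e3, e4] at key
    have hA0 : 0 ≤ ‖1 - (starRingEnd ℂ) γ * u‖ := norm_nonneg _
    have h5a : ‖u - γ‖ ^ 2
        ≤ c ^ 2 * ‖1 - (starRingEnd ℂ) γ * u‖ ^ 2 := by
      nlinarith [mul_self_le_mul_self hd0 hρ, mul_nonneg hc0 hA0]
    have h5b : (1 - ‖γ‖) ^ 2 ≤ ‖1 - (starRingEnd ℂ) γ * u‖ ^ 2 := by
      nlinarith [mul_self_le_mul_self hD0.le hlow]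
    have h5 : (1 - c ^ 2) * (1 - ‖γ‖) ^ 2
        ≤ (1 - ‖γ‖ ^ 2) * (1 - ‖u‖ ^ 2) := by
      nlinarith [mul_le_mul_of_nonneg_left h5b (sq_nonneg c)]
    have hU0 : 0 ≤ 1 - ‖u‖ := by linarith
    have a1 : 1 - ‖γ‖ ^ 2 ≤ 2 * (1 - ‖γ‖) := by
      nlinarith [sq_nonneg (1 - ‖γ‖)]
    have a2 : 1 - ‖u‖ ^ 2 ≤ 2 * (1 - ‖u‖) := by
      nlinarith [sq_nonneg (1 - ‖u‖)]
    have aU2 : 0 ≤ 1 - ‖u‖ ^ 2 := by nlinarith [norm_nonneg u]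
    have q1 : (1 - ‖γ‖ ^ 2) * (1 - ‖u‖ ^ 2)
        ≤ 4 * ((1 - ‖γ‖) * (1 - ‖u‖)) := by
      have := mul_le_mul a1 a2 aU2 (by linarith : (0:ℝ) ≤ 2 * (1 - ‖γ‖))
      nlinarith
    have h6 : (1 - c ^ 2) * (1 - ‖γ‖) ^ 2
        ≤ 4 * ((1 - ‖γ‖) * (1 - ‖u‖)) := le_trans h5 q1
    rw [hηdef]
    nlinarith [h6, hD0]
  have hwD : 1 - ‖γ‖ ≤ ‖w‖ := by
    have h1 : ‖(starRingEnd ℂ) τ * γ‖ = ‖γ‖ := by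
      rw [norm_mul, Complex.norm_conj, hτ, one_mul]
    have := one_sub_abs_le ((starRingEnd ℂ) τ * γ)
    rw [h1] at this
    rw [hw]
    exact this
  have hw0 : w ≠ 0 := by
    intro h0; rw [h0] at hwD; simp at hwD; linarith
  have hrew : Real.cos α * ‖w‖ ≤ w.re := by
    have h1 : Real.cos α < Real.cos |Complex.arg w| :=
      Real.cos_lt_cos_of_nonneg_of_le_pi (abs_nonneg _)
        (by linarith [Real.pi_pos]) harg
    rw [Real.cos_abs, Complex.cos_arg hw0] at h1
    have haw : 0 < ‖w‖ := lt_of_lt_of_le hD0 hwD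
    rw [lt_div_iff₀ haw] at h1
    linarith
  have hww' : ‖w' - w‖ = ‖u - γ‖ := by
    have h : w' - w = (starRingEnd ℂ) τ * (γ - u) := by rw [hw, hw']; ring
    rw [h, norm_mul, Complex.norm_conj, hτ, one_mul, ← norm_neg, neg_sub]
  have hrew' : w.re - ‖u - γ‖ ≤ w'.re := by
    have h1 : |(w' - w).re| ≤ ‖u - γ‖ := by
      rw [← hww']; exact Complex.abs_re_le_norm _
    have h2 : (w' - w).re = w'.re - w.re := by simp [Complex.sub_re]
    rw [h2] at h1
    linarith [(abs_le.1 h1).1]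
  have hw'up : ‖w'‖ ≤ ‖w‖ + ‖u - γ‖ := by
    have h : w' = w + (w' - w) := by ring
    rw [h]
    calc ‖w + (w' - w)‖ ≤ ‖w‖ + ‖w' - w‖ :=
          norm_add_le _ _
      _ = _ := by rw [hww']
  have hrew'2 : 1 - ‖u‖ ≤ w'.re := by
    have h1 : ((starRingEnd ℂ) τ * u).re ≤ ‖u‖ := by
      have := Complex.re_le_norm ((starRingEnd ℂ) τ * u)
      rwa [norm_mul, Complex.norm_conj, hτ, one_mul] at this
    simp only [hw', Complex.sub_re, Complex.one_re]
    linarith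
  have hw'0 : 0 ≤ ‖w'‖ := norm_nonneg _
  by_cases hcase : M * (1 - ‖γ‖) ≤ ‖w‖
  · have hcase' : (2 * K + 2) * (1 - ‖γ‖) ≤ Real.cos α * ‖w‖ := by
      calc (2 * K + 2) * (1 - ‖γ‖) = M * Real.cos α * (1 - ‖γ‖) := by
            rw [hMc]
        _ ≤ Real.cos α * ‖w‖ := by nlinarith
    have hd2 : 2 * ‖u - γ‖ ≤ Real.cos α * ‖w‖ := by
      nlinarith [mul_nonneg hK0 hD0.le]
    have h3 : Real.cos α * ‖w‖ / 2 ≤ w'.re := by linarith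
    have h4 : ‖w'‖ ≤ 2 * ‖w‖ := by
      have haw : 0 < ‖w‖ := lt_of_lt_of_le hD0 hwD
      nlinarith
    calc min (Real.cos α / 4) (η / (M + K)) * ‖w'‖
        ≤ Real.cos α / 4 * ‖w'‖ :=
          mul_le_mul_of_nonneg_right (min_le_left _ _) hw'0
      _ ≤ Real.cos α / 4 * (2 * ‖w‖) :=
          mul_le_mul_of_nonneg_left h4 (by linarith)
      _ = Real.cos α * ‖w‖ / 2 := by ring
      _ ≤ w'.re := h3
  · push_neg at hcase
    have h1 : ‖w'‖ ≤ (M + K) * (1 - ‖γ‖) := by nlinarith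
    calc min (Real.cos α / 4) (η / (M + K)) * ‖w'‖
        ≤ η / (M + K) * ‖w'‖ :=
          mul_le_mul_of_nonneg_right (min_le_right _ _) hw'0
      _ ≤ η / (M + K) * ((M + K) * (1 - ‖γ‖)) :=
          mul_le_mul_of_nonneg_left h1 (le_of_lt (div_pos hη0 (by linarith)))
      _ = η * (1 - ‖γ‖) := by
          field_simp
      _ ≤ 1 - ‖u‖ := hηD
      _ ≤ w'.re := hrew'2

lemma one_sub_conj_mul_le {γ u : ℂ} (hγ : ‖γ‖ < 1) :
    ‖1 - (starRingEnd ℂ) γ * u‖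
      ≤ (1 - ‖γ‖ ^ 2) + ‖u - γ‖ := by
  have hid : (1 : ℂ) - (starRingEnd ℂ) γ * u
      = (1 - (starRingEnd ℂ) γ * γ) + (starRingEnd ℂ) γ * (γ - u) := by ring
  have h1 : (1 : ℂ) - (starRingEnd ℂ) γ * γ = ((1 - ‖γ‖ ^ 2 : ℝ) : ℂ) := by
    rw [mul_comm, Complex.mul_conj, ← Complex.sq_norm]
    push_cast; ring
  have h2 : ‖1 - (starRingEnd ℂ) γ * γ‖ = 1 - ‖γ‖ ^ 2 := by
    rw [h1, Complex.norm_real, Real.norm_eq_abs, _root_.abs_of_nonneg]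
    nlinarith [norm_nonneg γ]
  have h3 : ‖(starRingEnd ℂ) γ * (γ - u)‖ ≤ ‖u - γ‖ := by
    rw [norm_mul, Complex.norm_conj, ← norm_neg (u - γ), neg_sub]
    nlinarith [norm_nonneg (γ - u), norm_nonneg γ]
  calc ‖1 - (starRingEnd ℂ) γ * u‖
      ≤ ‖1 - (starRingEnd ℂ) γ * γ‖
        + ‖(starRingEnd ℂ) γ * (γ - u)‖ := by
        rw [hid]; exact norm_add_le _ _
    _ ≤ (1 - ‖γ‖ ^ 2) + ‖u - γ‖ := by rw [h2]; linarith

/-- The integrand along the trajectory starting at `(a,z)`. -/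
noncomputable def trajG {τ : ℂ} (E : EvolutionFamilyDisk τ) (a : ℝ) (z : ℂ) : ℝ → ℂ :=
  fun ξ => (E.φ a ξ z - τ) * ((starRingEnd ℂ) τ * E.φ a ξ z - 1) * E.p (E.φ a ξ z) ξ

lemma traj_eq {τ : ℂ} (E : EvolutionFamilyDisk τ) {a u v : ℝ} (ha : 0 ≤ a)
    (hau : a ≤ u) (huv : u ≤ v) {z : ℂ} (hz : z ∈ UD) :
    E.φ a v z = E.φ a u z + ∫ ξ in u..v, trajG E a z ξ := by
  have hw : E.φ a u z ∈ UD := E.mapsTo ha hau hz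
  have base := E.integral_eq (le_trans ha hau) huv _ hw
  have hLHS : E.φ a v z = E.φ u v (E.φ a u z) := E.comp ha hau huv z hz
  rw [hLHS, base]
  congr 1
  apply intervalIntegral.integral_congr
  intro ξ hξ
  rw [Set.uIcc_of_le huv] at hξ
  have hφ : E.φ u ξ (E.φ a u z) = E.φ a ξ z := (E.comp ha hau hξ.1 z hz).symm
  simp only [trajG, hφ]

lemma seg_bound {τ : ℂ} (E : EvolutionFamilyDisk τ) {a b : ℝ} (ha : 0 ≤ a)
    (hab : a ≤ b) {z : ℂ} (hz : z ∈ UD) :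
    ∃ r : ℝ, 0 ≤ r ∧ r < 1 ∧ ∀ t ∈ Set.Icc a b, ‖E.φ a t z‖ ≤ r := by
  by_cases hI : IntervalIntegrable (trajG E a z) MeasureTheory.volume a b
  · -- integrable case : trajectory is continuous on [a,b]
    have hIcc : IntegrableOn (trajG E a z) (Set.Icc a b) volume := by
      rw [integrableOn_Icc_iff_integrableOn_Ioc]
      exact (intervalIntegrable_iff_integrableOn_Ioc_of_le hab).1 hI
    have hcont0 : ContinuousOn (fun t => ∫ ξ in Set.Ioc a t, trajG E a z ξ) (Set.Icc a b) :=
      intervalIntegral.continuousOn_primitive hIcc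
    have hcont1 : ContinuousOn (fun t => z + ∫ ξ in a..t, trajG E a z ξ) (Set.Icc a b) := by
      apply continuousOn_const.add
      apply hcont0.congr
      intro t ht
      exact intervalIntegral.integral_of_le ht.1
    have hcont : ContinuousOn (fun t => E.φ a t z) (Set.Icc a b) := by
      apply hcont1.congr
      intro t ht
      exact E.integral_eq ha ht.1 z hz
    have hK : IsCompact ((fun t => E.φ a t z) '' Set.Icc a b) :=
      (isCompact_Icc).image_of_continuousOn hcont
    have hne : ((fun t => E.φ a t z) '' Set.Icc a b).Nonempty :=
      ⟨E.φ a a z, ⟨a, ⟨le_refl a, hab⟩, rfl⟩⟩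
    obtain ⟨x, hxmem, hxmax⟩ :=
      hK.exists_isMaxOn hne continuous_norm.continuousOn
    obtain ⟨t₀, ht₀, hx⟩ := hxmem
    refine ⟨‖x‖, norm_nonneg x, ?_, ?_⟩
    · rw [← hx]; exact E.mapsTo ha ht₀.1 hz
    · intro t ht
      exact hxmax ⟨t, ht, rfl⟩
  · -- non-integrable case : each value equals an endpoint value
    refine ⟨max (‖z‖) (‖E.φ a b z‖),
      le_trans (norm_nonneg z) (le_max_left _ _),
      max_lt hz (E.mapsTo ha hab hz), ?_⟩
    intro t ht
    by_cases h1 : IntervalIntegrable (trajG E a z) volume a t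
    · have h2 : ¬ IntervalIntegrable (trajG E a z) volume t b := fun h2 => hI (h1.trans h2)
      have heq := traj_eq E ha ht.1 ht.2 hz
      rw [intervalIntegral.integral_undef h2, add_zero] at heq
      rw [← heq]
      exact le_max_right _ _
    · have heq : E.φ a t z = z + ∫ ξ in a..t, trajG E a z ξ :=
        E.integral_eq ha ht.1 z hz
      rw [intervalIntegral.integral_undef h1, add_zero] at heq
      rw [heq]
      exact le_max_left _ _

/-- For a non-trivial evolution family in `𝔻` with common Denjoy-Wolff point
`τ ∈ ∂𝔻`, some trajectory converges to `τ` non-tangentially if and only if every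
trajectory converges to `τ` non-tangentially. -/
theorem nontangential_convergence_iff (τ : ℂ) (hτ : ‖τ‖ = 1)
    (E : EvolutionFamilyDisk τ) (hE : E.Nontrivial) :
    (∃ z ∈ UD, ∃ s : ℝ, 0 ≤ s ∧ ConvergesNonTangentially E s z) ↔
    (∀ z ∈ UD, ∀ s : ℝ, 0 ≤ s → ConvergesNonTangentially E s z) := by
  constructor
  · rintro ⟨z, hz, s, hs, htend, α, hα0, hαπ, hstolz⟩
    intro z' hz' s' hs'
    set s₀ : ℝ := max s s' with hs₀
    have hss₀ : s ≤ s₀ := le_max_left _ _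
    have hs's₀ : s' ≤ s₀ := le_max_right _ _
    have hs₀0 : 0 ≤ s₀ := le_trans hs hss₀
    have hγ₀ : E.φ s s₀ z ∈ UD := E.mapsTo hs hss₀ hz
    have hw₀ : E.φ s' s₀ z' ∈ UD := E.mapsTo hs' hs's₀ hz'
    set c : ℝ := ‖moeb (E.φ s s₀ z) (E.φ s' s₀ z')‖ with hc
    have hc0 : 0 ≤ c := norm_nonneg _
    have hc1 : c < 1 := moeb_abs_lt_one hγ₀ hw₀
    -- Schwarz-Pick comparison for t ≥ s₀
    have hsp : ∀ t : ℝ, s₀ ≤ t →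
        ‖moeb (E.φ s t z) (E.φ s' t z')‖ ≤ c := by
      intro t ht
      have hβ : E.φ s' t z' = E.φ s₀ t (E.φ s' s₀ z') := E.comp hs' hs's₀ ht z' hz'
      have hγe : E.φ s t z = E.φ s₀ t (E.φ s s₀ z) := E.comp hs hss₀ ht z hz
      rw [hβ, hγe]
      exact schwarz_pick_s16 (E.holo hs₀0 ht) (E.mapsTo hs₀0 ht) hγ₀ hw₀
    have hmemγ : ∀ t : ℝ, s ≤ t → E.φ s t z ∈ UD := fun t ht => E.mapsTo hs ht hz
    have hmemβ : ∀ t : ℝ, s' ≤ t → E.φ s' t z' ∈ UD := fun t ht => E.mapsTo hs' ht hz'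
    have hdist : ∀ t : ℝ, s₀ ≤ t →
        ‖E.φ s' t z' - E.φ s t z‖
          ≤ c * ‖1 - (starRingEnd ℂ) (E.φ s t z) * E.φ s' t z'‖ := by
      intro t ht
      have h1 := hsp t ht
      have hγt : ‖E.φ s t z‖ < 1 := hmemγ t (le_trans hss₀ ht)
      have hβt : ‖E.φ s' t z'‖ < 1 := hmemβ t (le_trans hs's₀ ht)
      have hden : (1 : ℂ) - (starRingEnd ℂ) (E.φ s t z) * E.φ s' t z' ≠ 0 :=
        den_ne_zero hγt hβt
      have hdenpos : 0 < ‖1 - (starRingEnd ℂ) (E.φ s t z) * E.φ s' t z'‖ :=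
        norm_pos_iff.mpr hden
      rw [moeb, norm_div, div_le_iff₀ hdenpos] at h1
      linarith
    -- Euclidean comparison for t ≥ s₀
    have hF1 : ∀ t : ℝ, s₀ ≤ t →
        ‖E.φ s' t z' - E.φ s t z‖
          ≤ c / (1 - c) * (1 - ‖E.φ s t z‖ ^ 2) := by
      intro t ht
      have hγt : ‖E.φ s t z‖ < 1 := hmemγ t (le_trans hss₀ ht)
      have h1 := hdist t ht
      have h2 := one_sub_conj_mul_le (u := E.φ s' t z') hγt
      have h3 : ‖E.φ s' t z' - E.φ s t z‖
          ≤ c * ((1 - ‖E.φ s t z‖ ^ 2)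
            + ‖E.φ s' t z' - E.φ s t z‖) := by
        calc ‖E.φ s' t z' - E.φ s t z‖
            ≤ c * ‖1 - (starRingEnd ℂ) (E.φ s t z) * E.φ s' t z'‖ := h1
          _ ≤ c * ((1 - ‖E.φ s t z‖ ^ 2)
              + ‖E.φ s' t z' - E.φ s t z‖) := by
              apply mul_le_mul_of_nonneg_left h2 hc0
      rw [div_mul_eq_mul_div, le_div_iff₀ (by linarith)]
      nlinarith [norm_nonneg (E.φ s' t z' - E.φ s t z)]
    -- convergence of the new trajectory
    have habsγ : Tendsto (fun t => ‖E.φ s t z‖) atTop (𝓝 1) := by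
      have := (continuous_norm.tendsto τ).comp htend
      rwa [hτ] at this
    have hbnd0 : Tendsto (fun t => c / (1 - c) * (1 - ‖E.φ s t z‖ ^ 2))
        atTop (𝓝 0) := by
      have h1 : Tendsto (fun t => 1 - ‖E.φ s t z‖ ^ 2) atTop (𝓝 0) := by
        have h2 : Tendsto (fun t => ‖E.φ s t z‖ ^ 2) atTop (𝓝 1) := by
          simpa using habsγ.pow 2
        have h3 := (tendsto_const_nhds (x := (1:ℝ)) (f := atTop)).sub h2
        simpa using h3
      have := h1.const_mul (c / (1 - c))
      simpa using this
    have hdiff0 : Tendsto (fun t => E.φ s' t z' - E.φ s t z) atTop (𝓝 0) := by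
      rw [tendsto_zero_iff_norm_tendsto_zero]
      apply squeeze_zero' (Eventually.of_forall (fun t => norm_nonneg _))
      · filter_upwards [eventually_ge_atTop s₀] with t ht
        exact hF1 t ht
      · exact hbnd0
    have htendβ : Tendsto (fun t => E.φ s' t z') atTop (𝓝 τ) := by
      have := htend.add hdiff0
      rw [add_zero] at this
      apply this.congr
      intro t; ring
    -- Stolz angle for the new trajectory
    obtain ⟨ε, hε0, hε1, hεP⟩ := stolz_transfer hα0 hαπ hc0 hc1
    obtain ⟨r, hr0, hr1, hrP⟩ := seg_bound E hs' hs's₀ hz'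
    set A : ℝ := max (Real.arccos ε) (Real.arccos ((1 - r) / 2)) with hA
    have hA2 : A < Real.pi / 2 := by
      apply max_lt
      · exact Real.arccos_lt_pi_div_two.2 hε0
      · exact Real.arccos_lt_pi_div_two.2 (by linarith)
    have hA0 : 0 ≤ A := le_trans (Real.arccos_nonneg ε) (le_max_left _ _)
    refine ⟨htendβ, (A + Real.pi / 2) / 2, by positivity, by linarith, ?_⟩
    intro t ht
    have hbound : |Complex.arg (1 - (starRingEnd ℂ) τ * E.φ s' t z')| ≤ A := by
      rcases le_total s₀ t with hcase | hcase
      · -- far regime : Stolz transfer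
        have hγt : ‖E.φ s t z‖ < 1 := hmemγ t (le_trans hss₀ hcase)
        have hβt : ‖E.φ s' t z'‖ < 1 := hmemβ t ht
        have harg := hstolz t (le_trans hss₀ hcase)
        have hεw := hεP τ (E.φ s t z) (E.φ s' t z') hτ hγt hβt harg (hdist t hcase)
        have hv : (1 : ℂ) - (starRingEnd ℂ) τ * E.φ s' t z' ≠ 0 := by
          intro h0
          have h1 : ‖(starRingEnd ℂ) τ * E.φ s' t z'‖ < 1 := by
            rw [norm_mul, Complex.norm_conj, hτ, one_mul]; exact hβt
          have h2 : (starRingEnd ℂ) τ * E.φ s' t z' = 1 := by linear_combination -h0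
          rw [h2] at h1; simp at h1
        exact le_trans (arg_le_arccos hε0 hv hεw) (le_max_left _ _)
      · -- initial segment : bounded modulus
        have := hrP t ⟨ht, hcase⟩
        exact le_trans (arg_le_of_abs_le hτ hr1 this) (le_max_right _ _)
    linarith
  · intro h
    refine ⟨0, by simp [UD], 0, le_refl 0, h 0 (by simp [UD]) 0 (le_refl 0)⟩
end
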